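/- arXiv:2007.05348 — 2 statements merged into one kernel-verified Lean document; each statement's English description precedes it below -/
import Mathlib

section
/- Let G be a core input-output network on node set V with input ι and output o, and let H be its generic homeostasis matrix over R = MvPolynomial (V × V) ℚ. Let K = {τ₁, …, τ_k} ⊆ V ∖ {ι, o} be a k-element node subset, and suppose there are permutations of the rows and of the columns of H bringing it to block upper triangular form [[A, B, C], [0, B_η, D], [0, 0, E]] (A and/or E possibly empty), where the diagonal block B_η is the K × K submatrix of H (its rows are the rows of H indexed by K and its columns are the columns of H indexed by K), so that B_η contains the k self-couplings x_{τᵢ,τᵢ}. Then B_η equals the generic Jacobian J_K of the induced subnetwork on K, and every node τᵢ ∈ K is an appendage node of G, i.e., τᵢ lies on no ιo-simple path. -/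
open Classical MvPolynomial

/-- An input-output network: a digraph on node set `V` (`edge a b` means there is an
arrow `a → b`) with a distinguished input node `inp` and a distinct output node `out`. -/
structure IONetwork (V : Type) where
  edge : V → V → Prop
  inp : V
  out : V
  inp_ne_out : inp ≠ out

/-- A cycle: a list of nodes forming a directed path whose first and last nodes coincide. -/
def IsCycle {V : Type} (E : V → V → Prop) (p : List V) : Prop :=
  p.Chain' E ∧ 2 ≤ p.length ∧ p.head? = p.getLast?

/-- Reachability by a directed path all of whose nodes stay inside `W`. -/
def RestrictedReach {V : Type} (E : V → V → Prop) (W : Set V) (a b : V) : Prop :=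
  Relation.ReflTransGen (fun x y => E x y ∧ x ∈ W ∧ y ∈ W) a b

/-- `a` occurs strictly before `b` in the list `p` (both occurring in `p`). -/
def Before {V : Type} [DecidableEq V] (p : List V) (a b : V) : Prop :=
  a ∈ p ∧ b ∈ p ∧ p.idxOf a < p.idxOf b

namespace IONetwork

variable {V : Type}

/-- An ιo-simple path: a directed path from the input node to the output node
with pairwise distinct nodes. -/
def IsIOSimplePath (G : IONetwork V) (p : List V) : Prop :=
  p.Chain' G.edge ∧ p.head? = some G.inp ∧ p.getLast? = some G.out ∧ p.Nodup

/-- A core network: every node is downstream from the input node and upstream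
from the output node. -/
def IsCore (G : IONetwork V) : Prop :=
  ∀ v : V, Relation.ReflTransGen G.edge G.inp v ∧ Relation.ReflTransGen G.edge v G.out

/-- A simple node: a node lying on some ιo-simple path. -/
def SimpleNode (G : IONetwork V) (v : V) : Prop :=
  ∃ p, G.IsIOSimplePath p ∧ v ∈ p

/-- A super-simple node: a node lying on every ιo-simple path. -/
def SuperSimple (G : IONetwork V) (v : V) : Prop :=
  ∀ p, G.IsIOSimplePath p → v ∈ p

/-- Two super-simple nodes are adjacent (with `a` upstream of `b`) if every ιo-simple
path visits `a` strictly before `b` and no super-simple node occurs strictly between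
them on an ιo-simple path. -/
def SSAdjacent [DecidableEq V] (G : IONetwork V) (a b : V) : Prop :=
  G.SuperSimple a ∧ G.SuperSimple b ∧ a ≠ b ∧
  (∀ p, G.IsIOSimplePath p → Before p a b) ∧
  (∀ c, G.SuperSimple c → ∀ p, G.IsIOSimplePath p → ¬ (Before p a c ∧ Before p c b))

/-- The node `v` belongs to the super-simple subnetwork `L(a,b)` determined by adjacent
super-simple nodes `a`, `b`: either it is one of the endpoints or some ιo-simple path
visits `a`, `v`, `b` in that order. -/
def InL [DecidableEq V] (G : IONetwork V) (a b v : V) : Prop :=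
  v = a ∨ v = b ∨ ∃ p, G.IsIOSimplePath p ∧ Before p a v ∧ Before p v b

/-- An appendage path component: a strongly connected component of the appendage
subnetwork (the induced subnetwork on the nodes lying on no ιo-simple path). -/
def IsAppendagePathComponent (G : IONetwork V) (K : Set V) : Prop :=
  K.Nonempty ∧ (∀ v ∈ K, ¬ G.SimpleNode v) ∧
  (∀ a ∈ K, ∀ b ∈ K, RestrictedReach G.edge {v | ¬ G.SimpleNode v} a b) ∧
  (∀ v, ¬ G.SimpleNode v →
    (∃ a ∈ K, RestrictedReach G.edge {v | ¬ G.SimpleNode v} a v ∧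
              RestrictedReach G.edge {v | ¬ G.SimpleNode v} v a) → v ∈ K)

/-- The no-cycle condition for a set `K` of appendage nodes: no cycle of `G` contains
both a node of `K` and a simple node but no super-simple node. -/
def NoCycleCond (G : IONetwork V) (K : Set V) : Prop :=
  ¬ ∃ γ : List V, IsCycle G.edge γ ∧ (∃ v ∈ γ, v ∈ K) ∧
    (∃ v ∈ γ, G.SimpleNode v) ∧ (∀ v ∈ γ, ¬ G.SuperSimple v)

/-- The node set of the structural subnetwork `S_G`: all simple nodes together with all
nodes of cycle appendage path components (those violating the no-cycle condition). -/
def StructuralSet (G : IONetwork V) : Set V :=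
  {v | G.SimpleNode v ∨
    ∃ K : Set V, G.IsAppendagePathComponent K ∧ ¬ G.NoCycleCond K ∧ v ∈ K}

/-- The node set of the super-simple structural subnetwork `L'(a,b)`: the simple nodes of
`L(a,b)` together with all appendage nodes lying on a cycle of `G` containing a simple
node of `L(a,b)` but no super-simple node. -/
def LpSet [DecidableEq V] (G : IONetwork V) (a b : V) : Set V :=
  {v | G.InL a b v} ∪
  {v | ¬ G.SimpleNode v ∧ ∃ γ : List V, IsCycle G.edge γ ∧ v ∈ γ ∧
        (∃ w ∈ γ, G.InL a b w ∧ G.SimpleNode w) ∧ ∀ w ∈ γ, ¬ G.SuperSimple w}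

/-- The generic entry associated to the ordered pair of nodes `(c, r)` (source `c`,
target `r`): the coupling/self-coupling indeterminate `x_{c,r}` if `c = r` or there is
an arrow `c → r`, and `0` otherwise. -/
noncomputable def genEntry (G : IONetwork V) (c r : V) : MvPolynomial (V × V) ℚ :=
  if c = r ∨ G.edge c r then MvPolynomial.X (c, r) else 0

/-- The generic Jacobian of the induced subnetwork on `W` (rows = targets, columns =
sources). -/
noncomputable def genJac (G : IONetwork V) (W : Set V) :
    Matrix ↥W ↥W (MvPolynomial (V × V) ℚ) :=
  Matrix.of fun r c => G.genEntry c.1 r.1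

/-- The generic homeostasis matrix of `G`: the generic Jacobian on `V` with the row of
the input node and the column of the output node deleted. -/
noncomputable def genH (G : IONetwork V) :
    Matrix {v : V // v ≠ G.inp} {v : V // v ≠ G.out} (MvPolynomial (V × V) ℚ) :=
  Matrix.of fun r c => G.genEntry c.1 r.1

/-- The determinant of the generic homeostasis matrix of `G`, computed after fixing a
bijection `V∖{o} ≃ V∖{ι}`. -/
noncomputable def detH [Fintype V] (G : IONetwork V)
    (e : {v : V // v ≠ G.out} ≃ {v : V // v ≠ G.inp}) : MvPolynomial (V × V) ℚ :=
  Matrix.det (Matrix.of fun r c : {v : V // v ≠ G.out} => G.genH (e r) c)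

/-- The determinant of the generic homeostasis matrix of the induced input-output
subnetwork on `W` with input node `a` and output node `b`, computed after fixing a
bijection `W∖{b} ≃ W∖{a}`. -/
noncomputable def subDetH [Fintype V] (G : IONetwork V) (W : Set V) (a b : V)
    (e : {v : V // v ∈ W ∧ v ≠ b} ≃ {v : V // v ∈ W ∧ v ≠ a}) :
    MvPolynomial (V × V) ℚ :=
  Matrix.det (Matrix.of fun r c : {v : V // v ∈ W ∧ v ≠ b} =>
    G.genEntry c.1 (e r).1)

end IONetwork

/-- The product of the coupling indeterminates along the consecutive arrows of a path
(given as a list of nodes). -/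
noncomputable def pathProd {V : Type} (p : List V) : MvPolynomial (V × V) ℚ :=
  ((p.zip p.tail).map fun ab => MvPolynomial.X ab).prod

/-- Lemma 5.2.  If row and column permutations bring the generic
homeostasis matrix `H` of a core network to block upper triangular form
`[[A,B,C],[0,B_η,D],[0,0,E]]` whose middle diagonal block `B_η` is the `K × K` submatrix
of `H` (rows partition `R1 ⊔ K ⊔ R3` of `V∖{ι}`, columns partition `C1 ⊔ K ⊔ C3` of
`V∖{o}`, with square off blocks and the indicated zero blocks), then `B_η` equals the
generic Jacobian of the induced subnetwork on `K`, and every node of `K` is an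
appendage node. -/
theorem stmt_14 {V : Type} [Fintype V] [DecidableEq V] (G : IONetwork V)
    (hcore : G.IsCore) (K : Set V)
    (hK : ∀ v ∈ K, v ≠ G.inp ∧ v ≠ G.out)
    (R1 R3 C1 C3 : Set V)
    (hrowpart : R1 ∪ K ∪ R3 = {v : V | v ≠ G.inp})
    (hR1K : Disjoint R1 K) (hR1R3 : Disjoint R1 R3) (hKR3 : Disjoint K R3)
    (hcolpart : C1 ∪ K ∪ C3 = {v : V | v ≠ G.out})
    (hC1K : Disjoint C1 K) (hC1C3 : Disjoint C1 C3) (hKC3 : Disjoint K C3)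
    (hsq1 : R1.ncard = C1.ncard) (hsq3 : R3.ncard = C3.ncard)
    (hz1 : ∀ r ∈ K ∪ R3, ∀ c ∈ C1, G.genEntry c r = 0)
    (hz2 : ∀ r ∈ R3, ∀ c ∈ C1 ∪ K, G.genEntry c r = 0) :
    (∀ r c : ↥K, G.genJac K r c = G.genEntry c.1 r.1) ∧
    (∀ v ∈ K, ¬ G.SimpleNode v) := by
  
  constructor
  · intro r c; rfl
  · intro v hvK
    rintro ⟨p, ⟨hch, hhead, hlast, hnd⟩, hvp⟩
    -- basic path facts
    have hne : p ≠ [] := by rintro rfl; simp at hhead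
    have hinj : Function.Injective p.get := List.nodup_iff_injective_get.mp hnd
    have hstep := List.isChain_iff_getElem.mp hch
    have hlen : 0 < p.length := List.length_pos_iff.mpr hne
    have h0 : p.get ⟨0, hlen⟩ = G.inp := by
      have := List.head?_eq_head hne
      rw [this] at hhead
      have h2 : p.head hne = p.get ⟨0, hlen⟩ := by
        cases p with
        | nil => exact absurd rfl hne
        | cons a l => rfl
      rw [h2] at hhead; exact Option.some.inj hhead
    have hlast1 : p.length - 1 < p.length := by omega
    have hN : p.get ⟨p.length - 1, hlast1⟩ = G.out := by
      rw [List.getLast?_eq_getLast hne, List.getLast_eq_getElem] at hlast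
      exact Option.some.inj hlast
    -- generic entries of existing couplings are nonzero
    have hgen : ∀ a b : V, (a = b ∨ G.edge a b) → G.genEntry a b ≠ 0 := by
      intro a b h
      unfold IONetwork.genEntry
      rw [if_pos h]
      exact MvPolynomial.X_ne_zero _
    have hz1' : ∀ r ∈ K ∪ R3, ∀ c ∈ C1, ¬(c = r ∨ G.edge c r) :=
      fun r hr c hc h => hgen c r h (hz1 r hr c hc)
    have hz2' : ∀ r ∈ R3, ∀ c ∈ C1 ∪ K, ¬(c = r ∨ G.edge c r) :=
      fun r hr c hc h => hgen c r h (hz2 r hr c hc)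
    -- membership utilities
    have hRne : ∀ w, w ∈ R1 ∪ K ∪ R3 → w ≠ G.inp := by
      intro w hw; rw [hrowpart] at hw; exact hw
    have hCne : ∀ w, w ∈ C1 ∪ K ∪ C3 → w ≠ G.out := by
      intro w hw; rw [hcolpart] at hw; exact hw
    have hrow3 : ∀ w, w ≠ G.inp → w ∈ R1 ∨ w ∈ K ∨ w ∈ R3 := by
      intro w hw
      have : w ∈ R1 ∪ K ∪ R3 := by rw [hrowpart]; exact hw
      rcases this with (h | h) | h <;> tauto
    have hcol3 : ∀ w, w ≠ G.out → w ∈ C1 ∨ w ∈ K ∨ w ∈ C3 := by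
      intro w hw
      have : w ∈ C1 ∪ K ∪ C3 := by rw [hcolpart]; exact hw
      rcases this with (h | h) | h <;> tauto
    -- C1 ∖ {inp} ⊆ R1
    have hC1R1 : ∀ w ∈ C1, w ≠ G.inp → w ∈ R1 := by
      intro w hw hwi
      rcases hrow3 w hwi with h | h | h
      · exact h
      · exact absurd (Or.inl rfl) (hz1' w (Or.inl h) w hw)
      · exact absurd (Or.inl rfl) (hz1' w (Or.inr h) w hw)
    -- counting
    have houtC : G.out ∉ C1 ∧ G.out ∉ C3 := by
      constructor
      · intro h; exact hCne G.out (Or.inl (Or.inl h)) rfl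
      · intro h; exact hCne G.out (Or.inr h) rfl
    have hinpR : G.inp ∉ R1 := fun h => hRne G.inp (Or.inl (Or.inl h)) rfl
    have hR1split : R1 = (R1 ∩ C1) ∪ ((R1 ∩ C3) ∪ (R1 ∩ {G.out})) := by
      ext w
      constructor
      · intro hw
        by_cases hwo : w = G.out
        · exact Or.inr (Or.inr ⟨hw, hwo⟩)
        · rcases hcol3 w hwo with h | h | h
          · exact Or.inl ⟨hw, h⟩
          · exact absurd h (Set.disjoint_left.mp hR1K hw)
          · exact Or.inr (Or.inl ⟨hw, h⟩)
      · intro h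
        simp only [Set.mem_union, Set.mem_inter_iff] at h
        tauto
    have hC1split : C1 = (C1 ∩ R1) ∪ (C1 ∩ {G.inp}) := by
      ext w
      constructor
      · intro hw
        by_cases hwi : w = G.inp
        · exact Or.inr ⟨hw, hwi⟩
        · exact Or.inl ⟨hw, hC1R1 w hw hwi⟩
      · intro h
        simp only [Set.mem_union, Set.mem_inter_iff] at h
        tauto
    have hd1 : Disjoint (R1 ∩ C1) ((R1 ∩ C3) ∪ (R1 ∩ {G.out})) := by
      rw [Set.disjoint_union_right]
      constructor
      · exact Disjoint.mono Set.inter_subset_right Set.inter_subset_right hC1C3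
      · rw [Set.disjoint_iff]
        rintro w ⟨⟨-, hw1⟩, -, hw2⟩
        exact houtC.1 (hw2 ▸ hw1)
    have hd2 : Disjoint (R1 ∩ C3) (R1 ∩ {G.out}) := by
      rw [Set.disjoint_iff]
      rintro w ⟨⟨-, hw1⟩, -, hw2⟩
      exact houtC.2 (hw2 ▸ hw1)
    have hd3 : Disjoint (C1 ∩ R1) (C1 ∩ {G.inp}) := by
      rw [Set.disjoint_iff]
      rintro w ⟨⟨-, hw1⟩, -, hw2⟩
      exact hinpR (hw2 ▸ hw1)
    have hcardeq : (R1 ∩ C3).ncard + (R1 ∩ {G.out}).ncard = (C1 ∩ {G.inp}).ncard := by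
      have e1 : R1.ncard = (R1 ∩ C1).ncard + ((R1 ∩ C3).ncard + (R1 ∩ {G.out}).ncard) := by
        conv_lhs => rw [hR1split]
        rw [Set.ncard_union_eq hd1 (Set.toFinite _) (Set.toFinite _),
          Set.ncard_union_eq hd2 (Set.toFinite _) (Set.toFinite _)]
      have e2 : C1.ncard = (C1 ∩ R1).ncard + (C1 ∩ {G.inp}).ncard := by
        conv_lhs => rw [hC1split]
        exact Set.ncard_union_eq hd3 (Set.toFinite _) (Set.toFinite _)
      rw [Set.inter_comm C1 R1] at e2
      omega
    have hsingle : (C1 ∩ {G.inp}).ncard ≤ 1 := by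
      have : (C1 ∩ {G.inp}).ncard ≤ ({G.inp} : Set V).ncard :=
        Set.ncard_le_ncard Set.inter_subset_right (Set.toFinite _)
      simpa using this
    have hsub : ∀ a ∈ R1 ∩ C3, ∀ b ∈ R1 ∩ C3, a = b := by
      rw [← Set.ncard_le_one (Set.toFinite _)]
      omega
    have hnonempty : ∀ w ∈ R1 ∩ C3, G.inp ∈ C1 ∧ G.out ∉ R1 := by
      intro w hw
      have h1 : 1 ≤ (R1 ∩ C3).ncard := by
        rw [Nat.one_le_iff_ne_zero, Ne, Set.ncard_eq_zero (Set.toFinite _)]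
        intro h; rw [h] at hw; exact hw
      constructor
      · have h2 : 1 ≤ (C1 ∩ {G.inp}).ncard := by omega
        rw [Nat.one_le_iff_ne_zero, Ne, Set.ncard_eq_zero (Set.toFinite _)] at h2
        obtain ⟨a, ha1, ha2⟩ := Set.nonempty_iff_ne_empty.mpr h2
        exact ha2 ▸ ha1
      · intro ho
        have : G.out ∈ R1 ∩ {G.out} := ⟨ho, rfl⟩
        have h3 : 1 ≤ (R1 ∩ {G.out}).ncard := by
          rw [Nat.one_le_iff_ne_zero, Ne, Set.ncard_eq_zero (Set.toFinite _)]
          intro h; rw [h] at this; exact this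
        omega
    have hnotaa : ¬(G.inp ∈ C3 ∧ G.out ∈ R1) := by
      rintro ⟨hi, ho⟩
      have hiC1 : G.inp ∉ C1 := fun h => Set.disjoint_left.mp hC1C3 h hi
      have e1 : C1 ∩ {G.inp} = ∅ := by
        rw [Set.eq_empty_iff_forall_notMem]
        rintro w ⟨hw1, hw2⟩
        exact hiC1 (hw2 ▸ hw1)
      have e2 : G.out ∈ R1 ∩ {G.out} := ⟨ho, rfl⟩
      have h3 : 1 ≤ (R1 ∩ {G.out}).ncard := by
        rw [Nat.one_le_iff_ne_zero, Ne, Set.ncard_eq_zero (Set.toFinite _)]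
        intro h; rw [h] at e2; exact e2
      rw [e1, Set.ncard_empty] at hcardeq
      omega
    -- backward trapping
    have back : ∀ i (h : i < p.length), p.get ⟨i, h⟩ ∈ K ∪ R3 →
        G.inp ∈ C3 ∨ ∃ j, ∃ hj : j < p.length, j < i ∧ p.get ⟨j, hj⟩ ∈ R1 ∩ C3 := by
      intro i
      induction i with
      | zero =>
        intro h hmem
        rw [h0] at hmem
        rcases hmem with h' | h'
        · exact absurd rfl (hK G.inp h').1
        · exact absurd rfl (hRne G.inp (Or.inr h'))
      | succ i ih =>
        intro h hmem
        have hi1 : i < p.length - 1 := by omega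
        have hi : i < p.length := by omega
        have hedge : G.edge (p.get ⟨i, hi⟩) (p.get ⟨i + 1, h⟩) := hstep i (by omega)
        set c := p.get ⟨i, hi⟩ with hc
        have hco : c ≠ G.out := by
          intro hc'
          have : (⟨i, hi⟩ : Fin p.length) = ⟨p.length - 1, hlast1⟩ :=
            hinj (by rw [hN, ← hc, hc'])
          have := Fin.mk.inj_iff.mp this
          omega
        rcases hcol3 c hco with hcc | hcc | hcc
        · exact absurd (Or.inr hedge) (hz1' _ hmem c hcc)
        · rcases ih hi (Or.inl hcc) with h' | ⟨j, hj, hji, hjm⟩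
          · exact Or.inl h'
          · exact Or.inr ⟨j, hj, by omega, hjm⟩
        · by_cases hci : c = G.inp
          · exact Or.inl (hci ▸ hcc)
          · rcases hrow3 c hci with hcr | hcr | hcr
            · exact Or.inr ⟨i, hi, by omega, ⟨hcr, hcc⟩⟩
            · rcases ih hi (Or.inl hcr) with h' | ⟨j, hj, hji, hjm⟩
              · exact Or.inl h'
              · exact Or.inr ⟨j, hj, by omega, hjm⟩
            · rcases ih hi (Or.inr hcr) with h' | ⟨j, hj, hji, hjm⟩
              · exact Or.inl h'
              · exact Or.inr ⟨j, hj, by omega, hjm⟩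
    -- forward trapping
    have fwd : ∀ m i (h : i < p.length), p.length - 1 - i = m →
        (p.get ⟨i, h⟩ ∈ R1 ∨ p.get ⟨i, h⟩ ∈ K) →
        G.out ∈ R1 ∨ ∃ j, ∃ hj : j < p.length, i ≤ j ∧ p.get ⟨j, hj⟩ ∈ R1 ∩ C3 := by
      intro m
      induction m with
      | zero =>
        intro i h heq hmem
        have hieq : i = p.length - 1 := by omega
        have : p.get ⟨i, h⟩ = G.out := by rw [← hN]; congr 1; exact Fin.mk_eq_mk.mpr hieq
        rw [this] at hmem
        rcases hmem with h' | h'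
        · exact Or.inl h'
        · exact absurd rfl (hK G.out h').2
      | succ m ih =>
        intro i h heq hmem
        have hi1 : i < p.length - 1 := by omega
        have hi2 : i + 1 < p.length := by omega
        have hedge : G.edge (p.get ⟨i, h⟩) (p.get ⟨i + 1, hi2⟩) := hstep i (by omega)
        set c := p.get ⟨i, h⟩ with hc
        set r := p.get ⟨i + 1, hi2⟩ with hr
        have hri : r ≠ G.inp := by
          intro hr'
          have : (⟨i + 1, hi2⟩ : Fin p.length) = ⟨0, hlen⟩ :=
            hinj (by rw [h0, ← hr, hr'])
          have := Fin.mk.inj_iff.mp this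
          omega
        have hco : c ≠ G.out := by
          intro hc'
          have : (⟨i, h⟩ : Fin p.length) = ⟨p.length - 1, hlast1⟩ :=
            hinj (by rw [hN, ← hc, hc'])
          have := Fin.mk.inj_iff.mp this
          omega
        have hnext : ∀ hr1 : r ∈ R1 ∨ r ∈ K,
            G.out ∈ R1 ∨ ∃ j, ∃ hj : j < p.length, i ≤ j ∧ p.get ⟨j, hj⟩ ∈ R1 ∩ C3 := by
          intro hr1
          rcases ih (i + 1) hi2 (by omega) hr1 with h' | ⟨j, hj, hji, hjm⟩
          · exact Or.inl h'
          · exact Or.inr ⟨j, hj, by omega, hjm⟩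
        rcases hcol3 c hco with hcc | hcc | hcc
        · -- c ∈ C1 : r ∉ K ∪ R3
          apply hnext
          rcases hrow3 r hri with h' | h' | h'
          · exact Or.inl h'
          · exact absurd (Or.inr hedge) (hz1' r (Or.inl h') c hcc)
          · exact absurd (Or.inr hedge) (hz1' r (Or.inr h') c hcc)
        · -- c ∈ K : r ∉ R3
          apply hnext
          rcases hrow3 r hri with h' | h' | h'
          · exact Or.inl h'
          · exact Or.inr h'
          · exact absurd (Or.inr hedge) (hz2' r h' c (Or.inr hcc))
        · -- c ∈ C3 : then c ∈ R1 ∩ C3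
          rcases hmem with h' | h'
          · exact Or.inr ⟨i, h, le_refl i, ⟨h', hcc⟩⟩
          · exact absurd hcc (Set.disjoint_left.mp hKC3 h')
    -- assemble
    obtain ⟨⟨i, hi⟩, hieq⟩ := List.mem_iff_get.mp hvp
    have hb := back i hi (by rw [hieq]; exact Or.inl hvK)
    have hf := fwd (p.length - 1 - i) i hi rfl (by rw [hieq]; exact Or.inr hvK)
    rcases hb with hb | ⟨j1, hj1, hj1i, hw1⟩
    · rcases hf with hf | ⟨j2, hj2, hij2, hw2⟩
      · exact hnotaa ⟨hb, hf⟩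
      · exact Set.disjoint_left.mp hC1C3 (hnonempty _ hw2).1 hb
    · rcases hf with hf | ⟨j2, hj2, hij2, hw2⟩
      · exact (hnonempty _ hw1).2 hf
      · have := hsub _ hw1 _ hw2
        have : (⟨j1, hj1⟩ : Fin p.length) = ⟨j2, hj2⟩ := hinj this
        have := Fin.mk.inj_iff.mp this
        omega
end

section
/- Let G be a core input-output network on node set V with generic homeostasis matrix H. Suppose permutations of the rows and columns of H produce a block upper triangular form having an irreducible k × k diagonal block B_η of structural class: there are distinct nodes ℓ, j, ρ₁, …, ρ_{k−1} ∈ V such that the rows of B_η are the rows of H indexed by {ρ₁, …, ρ_{k−1}, j}, the columns of B_η are the columns of H indexed by {ℓ, ρ₁, …, ρ_{k−1}}, and B_η contains exactly the k−1 self-couplings x_{ρᵢ,ρᵢ} (neither x_{ℓ,ℓ} nor x_{j,j}); irreducibility means no row and column permutations bring B_η into nontrivial block upper triangular form. Then ℓ and j are adjacent super-simple nodes of G, and no node among ρ₁, …, ρ_{k−1} is super-simple (the associated input-output subnetwork K_η on {ℓ, ρ₁, …, ρ_{k−1}, j} contains exactly two super-simple nodes of G, namely its input node ℓ and its output node j).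 -/
open Classical MvPolynomial

section Helpers18

lemma chain'_getElem {α : Type} {R : α → α → Prop} {p : List α} (h : p.Chain' R) {i : ℕ}
    (hi : i + 1 < p.length) : R (p[i]'(by omega)) (p[i+1]'hi) := by
  have := List.isChain_iff_getElem.mp h i (by omega)
  simpa [List.get_eq_getElem] using this

lemma exists_simplePath_of_reflTransGen {α : Type} {R : α → α → Prop} {a b : α}
    (h : Relation.ReflTransGen R a b) :
    ∃ p : List α, p.Chain' R ∧ p.head? = some a ∧ p.getLast? = some b ∧ p.Nodup := by
  induction h using Relation.ReflTransGen.head_induction_on with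
  | refl => exact ⟨[b], List.isChain_singleton b, rfl, rfl, by simp⟩
  | @head x c hxc hcb ih =>
    obtain ⟨p, hc, hh, hl, hn⟩ := ih
    by_cases hx : x ∈ p
    · obtain ⟨s, t, rfl⟩ := List.append_of_mem hx
      have hsuf : (x :: t) <:+ (s ++ x :: t) := ⟨s, rfl⟩
      refine ⟨x :: t, hc.suffix hsuf, rfl, ?_, hn.sublist hsuf.sublist⟩
      rw [List.getLast?_append] at hl
      obtain ⟨y, hy⟩ : ∃ y, (x :: t).getLast? = some y :=
        ⟨(x :: t).getLast (by simp), List.getLast?_eq_getLast (by simp)⟩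
      rw [hy] at hl ⊢
      simpa using hl
    · obtain ⟨ys, rfl⟩ := List.head?_eq_some_iff.mp hh
      refine ⟨x :: c :: ys, List.isChain_cons_cons.mpr ⟨hxc, hc⟩, rfl, ?_,
        List.nodup_cons.mpr ⟨hx, hn⟩⟩
      rw [List.getLast?_cons_cons]
      exact hl

lemma chain_mem_head_or {α : Type} {R : α → α → Prop} {p : List α} (hc : p.Chain' R) {a x : α}
    (hh : p.head? = some a) (hx : x ∈ p) : x = a ∨ ∃ y, R y x := by
  obtain ⟨i, hi, rfl⟩ := List.mem_iff_getElem.mp hx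
  cases i with
  | zero =>
    left
    obtain ⟨ys, rfl⟩ := List.head?_eq_some_iff.mp hh
    rfl
  | succ k =>
    right
    exact ⟨p[k]'(by omega), chain'_getElem hc hi⟩

lemma chain_segment {α : Type} {E : α → α → Prop} {P : α → Prop} {p : List α} (hc : p.Chain' E)
    {i j : ℕ} (hij : i ≤ j) (hj : j < p.length)
    (hP : ∀ k (hk : k < p.length), i ≤ k → k ≤ j → P (p[k]'hk)) :
    Relation.ReflTransGen (fun x y => E x y ∧ P x ∧ P y) (p[i]'(lt_of_le_of_lt hij hj))
      (p[j]'hj) := by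
  induction j, hij using Nat.le_induction with
  | base => exact Relation.ReflTransGen.refl
  | succ j hij ih =>
    have hj' : j < p.length := by omega
    exact Relation.ReflTransGen.tail
      (ih hj' (fun k hk h1 h2 => hP k hk h1 (by omega)))
      ⟨chain'_getElem hc hj, hP j hj' hij (by omega), hP (j+1) hj (by omega) le_rfl⟩

lemma indexOf_getElem_nodup {α : Type} [DecidableEq α] {p : List α} (hn : p.Nodup) {i : ℕ}
    (hi : i < p.length) : p.idxOf (p[i]'hi) = i := by
  have hm : p[i]'hi ∈ p := List.getElem_mem hi
  have hlt := List.idxOf_lt_length_iff.mpr hm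
  have h2 := List.getElem_idxOf hlt
  exact (hn.getElem_inj_iff).mp h2

end Helpers18

/-- Propositions 6.8, 6.9 and Corollary 6.10.  Suppose row and column
permutations bring the generic homeostasis matrix `H` of a core network to block upper
triangular form with an irreducible structural diagonal block `B_η`: its rows are the
rows of `H` indexed by `Kmid ∪ {vj}`, its columns are the columns of `H` indexed by
`Kmid ∪ {vl}` (so `B_η` contains exactly the self-couplings of the nodes of `Kmid`).
Then `vl` and `vj` are adjacent super-simple nodes of `G` and no node of `Kmid` is
super-simple. -/
theorem stmt_18 {V : Type} [Fintype V] [DecidableEq V] (G : IONetwork V)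
    (hcore : G.IsCore) (vl vj : V) (Kmid : Set V)
    (hvlj : vl ≠ vj) (hvl : vl ∉ Kmid) (hvj : vj ∉ Kmid)
    (R1 R3 C1 C3 : Set V)
    (hrowpart : R1 ∪ (Kmid ∪ {vj}) ∪ R3 = {v : V | v ≠ G.inp})
    (hd1 : Disjoint R1 (Kmid ∪ {vj})) (hd2 : Disjoint R1 R3)
    (hd3 : Disjoint (Kmid ∪ {vj}) R3)
    (hcolpart : C1 ∪ (Kmid ∪ {vl}) ∪ C3 = {v : V | v ≠ G.out})
    (hd4 : Disjoint C1 (Kmid ∪ {vl})) (hd5 : Disjoint C1 C3)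
    (hd6 : Disjoint (Kmid ∪ {vl}) C3)
    (hsq1 : R1.ncard = C1.ncard) (hsq3 : R3.ncard = C3.ncard)
    (hz1 : ∀ r ∈ (Kmid ∪ {vj}) ∪ R3, ∀ c ∈ C1, G.genEntry c r = 0)
    (hz2 : ∀ r ∈ R3, ∀ c ∈ C1 ∪ (Kmid ∪ {vl}), G.genEntry c r = 0)
    (hirr : ¬ ∃ Rs Cs : Set V, Rs ⊆ Kmid ∪ {vj} ∧ Cs ⊆ Kmid ∪ {vl} ∧
        Rs.Nonempty ∧ Cs.Nonempty ∧ Rs.ncard + Cs.ncard = (Kmid ∪ {vj}).ncard ∧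
        ∀ r ∈ Rs, ∀ c ∈ Cs, G.genEntry c r = 0) :
    G.SSAdjacent vl vj ∧ ∀ v ∈ Kmid, ¬ G.SuperSimple v := by

  -- basic membership characterizations
  have hrow : ∀ v : V, v ∈ R1 ∪ (Kmid ∪ {vj}) ∪ R3 ↔ v ≠ G.inp := fun v => by
    rw [hrowpart]; rfl
  have hcol : ∀ v : V, v ∈ C1 ∪ (Kmid ∪ {vl}) ∪ C3 ↔ v ≠ G.out := fun v => by
    rw [hcolpart]; rfl
  have hX : ∀ a b : V, (a = b ∨ G.edge a b) → G.genEntry a b ≠ 0 := by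
    intro a b h
    rw [IONetwork.genEntry, if_pos h]
    exact MvPolynomial.X_ne_zero _
  -- diagonal exclusions
  have hdC1 : ∀ c, c ∈ C1 → c ∉ (Kmid ∪ {vj}) ∪ R3 :=
    fun c hc hmem => hX c c (Or.inl rfl) (hz1 c hmem c hc)
  have hdR3 : ∀ r, r ∈ R3 → r ∉ C1 ∪ (Kmid ∪ {vl}) :=
    fun r hr hmem => hX r r (Or.inl rfl) (hz2 r hr r hmem)
  -- edge rules
  have hrule1 : ∀ a b, G.edge a b → a ∈ C1 → b ∉ (Kmid ∪ {vj}) ∪ R3 :=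
    fun a b he ha hb => hX a b (Or.inr he) (hz1 b hb a ha)
  have hrule2 : ∀ a b, G.edge a b → a ∈ C1 ∪ (Kmid ∪ {vl}) → b ∉ R3 :=
    fun a b he ha hb => hX a b (Or.inr he) (hz2 b hb a ha)
  -- simple non-membership facts
  have hK_ne_inp : ∀ x ∈ Kmid, x ≠ G.inp := fun x hx =>
    (hrow x).mp (Or.inl (Or.inr (Or.inl hx)))
  have hK_ne_out : ∀ x ∈ Kmid, x ≠ G.out := fun x hx =>
    (hcol x).mp (Or.inl (Or.inr (Or.inl hx)))
  have hvj_ne_inp : vj ≠ G.inp := (hrow vj).mp (Or.inl (Or.inr (Or.inr rfl)))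
  have hvl_ne_out : vl ≠ G.out := (hcol vl).mp (Or.inl (Or.inr (Or.inr rfl)))
  have hvl_nC1 : vl ∉ C1 := fun h => Set.disjoint_left.mp hd4 h (Or.inr rfl)
  have hvl_nR3 : vl ∉ R3 := fun h => hdR3 vl h (Or.inr (Or.inr rfl))
  have hvj_nC1 : vj ∉ C1 := fun h => hdC1 vj h (Or.inl (Or.inr rfl))
  have hvj_nR3 : vj ∉ R3 := fun h => Set.disjoint_left.mp hd3 (Or.inr rfl) h
  -- C1 elements into R1
  have hC1_to_R1 : ∀ c ∈ C1, c ≠ G.inp → c ∈ R1 := by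
    intro c hc hne
    rcases (hrow c).mpr hne with (h | h) | h
    · exact h
    · exact absurd h (fun h => hdC1 c hc (Or.inl h))
    · exact absurd h (fun h => hdC1 c hc (Or.inr h))
  have hR3_to_C3 : ∀ r ∈ R3, r ≠ G.out → r ∈ C3 := by
    intro r hr hne
    rcases (hcol r).mpr hne with (h | h) | h
    · exact absurd h (fun h => hdR3 r hr (Or.inl h))
    · exact absurd h (fun h => hdR3 r hr (Or.inr h))
    · exact h
  have hvl_to_R1 : vl ≠ G.inp → vl ∈ R1 := by
    intro hne
    rcases (hrow vl).mpr hne with (h | h) | h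
    · exact h
    · rcases h with h | h
      · exact absurd h hvl
      · exact absurd h hvlj
    · exact absurd h hvl_nR3
  have hvj_to_C3 : vj ≠ G.out → vj ∈ C3 := by
    intro hne
    rcases (hcol vj).mpr hne with (h | h) | h
    · exact absurd h hvj_nC1
    · rcases h with h | h
      · exact absurd h hvj
      · exact absurd h (fun h => hvlj h.symm)
        
    · exact h
  have hC1subR1 : G.inp ∉ C1 → C1 = R1 := by
    intro h
    refine Set.eq_of_subset_of_ncard_le (fun c hc => hC1_to_R1 c hc ?_) (le_of_eq hsq1)
    rintro rfl; exact h hc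
  have hR3subC3 : G.out ∉ R3 → R3 = C3 := by
    intro h
    refine Set.eq_of_subset_of_ncard_le (fun r hr => hR3_to_C3 r hr ?_) (le_of_eq hsq3.symm)
    rintro rfl; exact h hr
  -- Zone identity 1 : R1 ∪ {inp} = C1 ∪ {vl}
  have Zeq1 : R1 ∪ {G.inp} = C1 ∪ {vl} := by
    by_cases hiv : G.inp = vl
    · have hinC1 : G.inp ∉ C1 := by rw [hiv]; exact hvl_nC1
      rw [hC1subR1 hinC1, hiv]
    · have hinpC1 : G.inp ∈ C1 := by
        rcases (hcol G.inp).mpr G.inp_ne_out with (h | h) | h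
        · exact h
        · rcases h with h | h
          · exact absurd rfl (hK_ne_inp _ h)
          · exact absurd h hiv
        · exfalso
          have h1 : G.inp ∉ C1 := fun h' => Set.disjoint_left.mp hd5 h' h
          have hC1R1 := hC1subR1 h1
          have hvlne : vl ≠ G.inp := by
            rintro rfl; exact Set.disjoint_left.mp hd6 (Or.inr rfl) h
          have := hvl_to_R1 hvlne
          rw [← hC1R1] at this
          exact hvl_nC1 this
      have hvlne : vl ≠ G.inp := by rintro rfl; exact hvl_nC1 hinpC1
      have hvlR1 : vl ∈ R1 := hvl_to_R1 hvlne
      have hsub : insert vl (C1 \ {G.inp}) ⊆ R1 := by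
        rintro x (rfl | ⟨hx1, hx2⟩)
        · exact hvlR1
        · exact hC1_to_R1 x hx1 hx2
      have hcard : R1.ncard ≤ (insert vl (C1 \ {G.inp})).ncard := by
        rw [Set.ncard_insert_of_notMem (fun h => hvl_nC1 h.1),
          Set.ncard_diff_singleton_add_one hinpC1]
        exact le_of_eq hsq1
      have hR1eq : insert vl (C1 \ {G.inp}) = R1 :=
        Set.eq_of_subset_of_ncard_le hsub hcard
      rw [← hR1eq]
      ext x
      simp only [Set.mem_union, Set.mem_insert_iff, Set.mem_diff, Set.mem_singleton_iff]
      constructor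
      · rintro ((rfl | ⟨h1, h2⟩) | rfl)
        · exact Or.inr rfl
        · exact Or.inl h1
        · exact Or.inl hinpC1
      · rintro (h | rfl)
        · by_cases hx : x = G.inp
          · exact Or.inr hx
          · exact Or.inl (Or.inr ⟨h, hx⟩)
        · exact Or.inl (Or.inl rfl)
  -- Zone identity 3 : C3 ∪ {out} = R3 ∪ {vj}
  have Zeq3 : C3 ∪ {G.out} = R3 ∪ {vj} := by
    by_cases hov : G.out = vj
    · have hoR3 : G.out ∉ R3 := by rw [hov]; exact hvj_nR3
      rw [← hR3subC3 hoR3, hov]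
    · have houtR3 : G.out ∈ R3 := by
        rcases (hrow G.out).mpr (Ne.symm G.inp_ne_out) with (h | h) | h
        · exfalso
          have h1 : G.out ∉ R3 := fun h' => Set.disjoint_left.mp hd2 h h'
          have hR3C3 := hR3subC3 h1
          have hvjne : vj ≠ G.out := by
            rintro rfl; exact Set.disjoint_left.mp hd1 h (Or.inr rfl)
          have := hvj_to_C3 hvjne
          rw [← hR3C3] at this
          exact hvj_nR3 this
        · rcases h with h | h
          · exact absurd rfl (hK_ne_out _ h)
          · exact absurd h hov
        · exact h
      have hvjne : vj ≠ G.out := by rintro rfl; exact hvj_nR3 houtR3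
      have hvjC3 : vj ∈ C3 := hvj_to_C3 hvjne
      have hsub : insert vj (R3 \ {G.out}) ⊆ C3 := by
        rintro x (rfl | ⟨hx1, hx2⟩)
        · exact hvjC3
        · exact hR3_to_C3 x hx1 hx2
      have hcard : C3.ncard ≤ (insert vj (R3 \ {G.out})).ncard := by
        rw [Set.ncard_insert_of_notMem (fun h => hvj_nR3 h.1),
          Set.ncard_diff_singleton_add_one houtR3]
        exact le_of_eq hsq3.symm
      have hC3eq : insert vj (R3 \ {G.out}) = C3 :=
        Set.eq_of_subset_of_ncard_le hsub hcard
      rw [← hC3eq]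
      ext x
      simp only [Set.mem_union, Set.mem_insert_iff, Set.mem_diff, Set.mem_singleton_iff]
      constructor
      · rintro ((rfl | ⟨h1, h2⟩) | rfl)
        · exact Or.inr rfl
        · exact Or.inl h1
        · exact Or.inl houtR3
      · rintro (h | rfl)
        · by_cases hx : x = G.out
          · exact Or.inr hx
          · exact Or.inl (Or.inr ⟨h, hx⟩)
        · exact Or.inl (Or.inl rfl)

  -- zone facts
  have hZ1inp : G.inp ∈ C1 ∪ {vl} := by
    rw [← Zeq1]; exact Or.inr rfl
  have hR1Z1 : R1 ⊆ C1 ∪ {vl} := by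
    rw [← Zeq1]; exact Set.subset_union_left
  have hZ13 : ∀ x, x ∈ C1 ∪ {vl} → x ∉ C3 ∪ {G.out} := by
    rintro x (hx | rfl) (h | h)
    · exact Set.disjoint_left.mp hd5 hx h
    · exact (hcol x).mp (Or.inl (Or.inl hx)) h
    · exact Set.disjoint_left.mp hd6 (Or.inr rfl) h
    · exact hvl_ne_out h
  have hZ1K : ∀ x, x ∈ C1 ∪ {vl} → x ∉ Kmid := by
    rintro x (hx | rfl) h
    · exact Set.disjoint_left.mp hd4 hx (Or.inl h)
    · exact hvl h
  have hKZ3 : ∀ x, x ∈ Kmid → x ∉ C3 ∪ {G.out} := by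
    rintro x hx (h | h)
    · exact Set.disjoint_left.mp hd6 (Or.inl hx) h
    · exact hK_ne_out x hx h
  have htot : ∀ x : V, x ∈ C1 ∪ {vl} ∨ x ∈ Kmid ∨ x ∈ C3 ∪ {G.out} := by
    intro x
    by_cases hx : x = G.out
    · exact Or.inr (Or.inr (Or.inr hx))
    · rcases (hcol x).mpr hx with (h | h) | h
      · exact Or.inl (Or.inl h)
      · rcases h with h | h
        · exact Or.inr (Or.inl h)
        · exact Or.inl (Or.inr h)
      · exact Or.inr (Or.inr (Or.inl h))
  -- the structure of every ιo-simple path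
  have pathStruct : ∀ p : List V, G.IsIOSimplePath p →
      ∃ l m : ℕ, ∃ (hl : l < p.length) (hm : m < p.length),
        p[l]'hl = vl ∧ p[m]'hm = vj ∧ l < m ∧
        (∀ i (hi : i < p.length), i ≤ l → p[i]'hi ∈ C1 ∪ {vl}) ∧
        (∀ i (hi : i < p.length), l < i → i < m → p[i]'hi ∈ Kmid) ∧
        (∀ i (hi : i < p.length), m ≤ i → p[i]'hi ∈ C3 ∪ {G.out}) := by
    rintro p ⟨hch, hhd, hlast, hnd⟩
    have hpne : p ≠ [] := by rintro rfl; simp at hhd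
    have hlen : 0 < p.length := List.length_pos_iff.mpr hpne
    set f : ℕ → V := fun i => p.getD i G.inp with hfdef
    have hf : ∀ i (h : i < p.length), f i = p[i]'h := fun i h => List.getD_eq_getElem p _ h
    have hf0 : f 0 = G.inp := by
      obtain ⟨ys, hys⟩ := List.head?_eq_some_iff.mp hhd
      rw [hf 0 hlen]
      subst hys; rfl
    have hflast : f (p.length - 1) = G.out := by
      rw [hf _ (by omega)]
      rw [List.getLast?_eq_getElem?, List.getElem?_eq_getElem (by omega)] at hlast
      exact Option.some.inj hlast
    have hstepf : ∀ i, i + 1 < p.length → G.edge (f i) (f (i+1)) := by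
      intro i h
      rw [hf i (by omega), hf (i+1) h]
      exact chain'_getElem hch h
    have hinjf : ∀ i j, i < p.length → j < p.length → f i = f j → i = j := by
      intro i j hi hj h
      rw [hf i hi, hf j hj] at h
      exact (hnd.getElem_inj_iff).mp h
    have P2f : ∀ i, i + 1 < p.length → f i ∈ C1 ∪ {vl} → f (i+1) ∉ C1 ∪ {vl} → f i = vl := by
      intro i h1 ha hb
      rcases ha with ha | ha
      · exfalso
        have hb' := hrule1 _ _ (hstepf i h1) ha
        have hbin : f (i+1) ≠ G.inp := fun h => hb (h ▸ hZ1inp)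
        rcases (hrow _).mpr hbin with (h | h) | h
        · exact hb (hR1Z1 h)
        · exact hb' (Or.inl h)
        · exact hb' (Or.inr h)
      · exact ha
    have P1f : ∀ i, i + 1 < p.length → f i ∉ C3 ∪ {G.out} → f (i+1) ∈ C3 ∪ {G.out} →
        f (i+1) = vj := by
      intro i h1 ha hb
      rw [Zeq3] at hb
      have hMc : f i ∈ C1 ∪ (Kmid ∪ {vl}) := by
        rcases htot (f i) with (h | h) | h | h
        · exfalso
          have := hrule1 _ _ (hstepf i h1) h
          rcases hb with h' | h'
          · exact this (Or.inr h')
          · exact this (Or.inl (Or.inr h'))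
        · exact Or.inr (Or.inr h)
        · exact Or.inr (Or.inl h)
        · exact absurd h ha
      have := hrule2 _ _ (hstepf i h1) hMc
      rcases hb with h' | h'
      · exact absurd h' this
      · exact h'
    -- find l : last index of zone Z1
    have hout_nZ1 : f (p.length - 1) ∉ C1 ∪ {vl} := by
      rw [hflast]; exact fun h => hZ13 _ h (Or.inr rfl)
    have hex1 : ∃ i, i < p.length ∧ f i ∉ C1 ∪ {vl} := ⟨p.length - 1, by omega, hout_nZ1⟩
    obtain ⟨hjlt, hjZ⟩ := Nat.find_spec hex1
    set j := Nat.find hex1 with hjdef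
    have hj0 : j ≠ 0 := by
      intro h
      rw [h, hf0] at hjZ
      exact hjZ hZ1inp
    set l := j - 1 with hldef
    have hl1 : l + 1 = j := by omega
    have upZ1 : ∀ i, i ≤ l → f i ∈ C1 ∪ {vl} := by
      intro i hi
      by_contra h
      exact Nat.find_min hex1 (by omega) ⟨by omega, h⟩
    have hfl : f l = vl := by
      apply P2f l (by omega) (upZ1 l le_rfl)
      rw [hl1]; exact hjZ
    have afterNotZ1 : ∀ i, l < i → i < p.length → f i ∉ C1 ∪ {vl} := by
      intro i hi hin hmem
      have hex : ∃ t, (i ≤ t ∧ t < p.length) ∧ f t ∉ C1 ∪ {vl} := by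
        refine ⟨p.length - 1, ⟨?_, by omega⟩, hout_nZ1⟩
        have : i ≠ p.length - 1 := by
          intro h; rw [h, hflast] at hmem; exact hZ13 _ hmem (Or.inr rfl)
        omega
      obtain ⟨⟨hti, htlt⟩, htZ⟩ := Nat.find_spec hex
      set t := Nat.find hex with htdef
      have hti' : i < t := by
        rcases Nat.lt_or_ge i t with h | h
        · exact h
        · exfalso; have : t = i := by omega
          rw [this] at htZ; exact htZ hmem
      have htm : f (t - 1) ∈ C1 ∪ {vl} := by
        by_contra h
        exact Nat.find_min hex (show t - 1 < t by omega) ⟨⟨by omega, by omega⟩, h⟩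
      have := P2f (t-1) (by omega) htm (by rw [show t - 1 + 1 = t by omega]; exact htZ)
      have heq : t - 1 = l := hinjf _ _ (by omega) (by omega) (by rw [this, hfl])
      omega
    -- find m : first index of zone Z3
    have hout_Z3 : f (p.length - 1) ∈ C3 ∪ {G.out} := by rw [hflast]; exact Or.inr rfl
    have hex3 : ∃ i, i < p.length ∧ f i ∈ C3 ∪ {G.out} := ⟨p.length - 1, by omega, hout_Z3⟩
    obtain ⟨hmlt, hmZ⟩ := Nat.find_spec hex3
    set m := Nat.find hex3 with hmdef
    have hm0 : m ≠ 0 := by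
      intro h
      rw [h, hf0] at hmZ
      exact hZ13 _ hZ1inp hmZ
    have beforeNotZ3 : ∀ i, i < m → i < p.length → f i ∉ C3 ∪ {G.out} := by
      intro i h1 h2 hmem
      exact Nat.find_min hex3 h1 ⟨h2, hmem⟩
    have hfm : f m = vj := by
      have := P1f (m-1) (by omega) (beforeNotZ3 (m-1) (by omega) (by omega)) ?_
      · rwa [show m - 1 + 1 = m by omega] at this
      · rw [show m - 1 + 1 = m by omega]; exact hmZ
    have afterZ3 : ∀ i, m ≤ i → i < p.length → f i ∈ C3 ∪ {G.out} := by
      intro i hi hin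
      by_contra hmem
      have hex : ∃ t, (i ≤ t ∧ t < p.length) ∧ f t ∈ C3 ∪ {G.out} := by
        refine ⟨p.length - 1, ⟨?_, by omega⟩, hout_Z3⟩
        have : i ≠ p.length - 1 := by
          intro h; rw [h] at hmem; exact hmem hout_Z3
        omega
      obtain ⟨⟨hti, htlt⟩, htZ⟩ := Nat.find_spec hex
      set t := Nat.find hex with htdef
      have hti' : i < t := by
        rcases Nat.lt_or_ge i t with h | h
        · exact h
        · exfalso; have : t = i := by omega
          rw [this] at htZ; exact hmem htZ
      have htm : f (t - 1) ∉ C3 ∪ {G.out} := by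
        intro h
        exact Nat.find_min hex (show t - 1 < t by omega) ⟨⟨by omega, by omega⟩, h⟩
      have := P1f (t-1) (by omega) htm (by rw [show t - 1 + 1 = t by omega]; exact htZ)
      rw [show t - 1 + 1 = t by omega] at this
      have heq : t = m := hinjf _ _ (by omega) (by omega) (by rw [this, hfm])
      omega
    have hlm : l < m := by
      by_contra h
      have : f l ∈ C3 ∪ {G.out} := afterZ3 l (by omega) (by omega)
      rw [hfl] at this
      exact hZ13 vl (Or.inr rfl) this
    refine ⟨l, m, by omega, hmlt, ?_, ?_, hlm, ?_, ?_, ?_⟩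
    · rw [← hf l (by omega)]; exact hfl
    · rw [← hf m hmlt]; exact hfm
    · intro i hi h; rw [← hf i hi]; exact upZ1 i h
    · intro i hi h1 h2
      rw [← hf i hi]
      rcases htot (f i) with h | h | h
      · exact absurd h (afterNotZ1 i h1 hi)
      · exact h
      · exact absurd h (beforeNotZ3 i h2 hi)
    · intro i hi h; rw [← hf i hi]; exact afterZ3 i h hi

  -- a simple path exists
  have hSP : ∃ p0, G.IsIOSimplePath p0 := by
    obtain ⟨p0, hc, hh, hl, hn⟩ := exists_simplePath_of_reflTransGen ((hcore G.inp).2)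
    exact ⟨p0, hc, hh, hl, hn⟩
  -- no node of Kmid is super-simple
  have notSS : ∀ v ∈ Kmid, ¬ G.SuperSimple v := by
    intro v hv hss
    have hv_ne_inp : v ≠ G.inp := hK_ne_inp v hv
    have hv_ne_out : v ≠ G.out := hK_ne_out v hv
    set Ev : V → V → Prop := fun x y => G.edge x y ∧ x ≠ v ∧ y ≠ v with hEvdef
    set Rch : Set V := {u | Relation.ReflTransGen Ev G.inp u} with hRchdef
    set Cor : Set V := {u | Relation.ReflTransGen Ev u G.out} with hCordef
    have hRchCor : ∀ u, u ∈ Rch → u ∉ Cor := by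
      intro u h1 h2
      have hw : Relation.ReflTransGen Ev G.inp G.out := Relation.ReflTransGen.trans h1 h2
      obtain ⟨q, hqc, hqh, hql, hqn⟩ := exists_simplePath_of_reflTransGen hw
      have hq : G.IsIOSimplePath q := ⟨hqc.imp (fun a b h => h.1), hqh, hql, hqn⟩
      rcases chain_mem_head_or hqc hqh (hss q hq) with h | ⟨y, hy⟩
      · exact hv_ne_inp h
      · exact hy.2.2 rfl
    have hvnR : v ∉ Rch := by
      intro h
      rcases Relation.ReflTransGen.cases_tail h with h' | ⟨c, _, hc⟩
      · exact hv_ne_inp h'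
      · exact hc.2.2 rfl
    have hRch_closed : ∀ u w, u ∈ Rch → G.edge u w → w ≠ v → w ∈ Rch := by
      intro u w hu he hw
      exact Relation.ReflTransGen.tail hu ⟨he, fun h => hvnR (h ▸ hu), hw⟩
    obtain ⟨p0, hp0⟩ := hSP
    obtain ⟨l, m, hl, hm, hpl, hpm, hlm, hup, hmid, hdown⟩ := pathStruct p0 hp0
    have hp0ne : p0 ≠ [] := by
      intro h; rw [h] at hl; simp at hl
    have hp00 : p0[0]'(by omega) = G.inp := by
      obtain ⟨ys, hys⟩ := List.head?_eq_some_iff.mp hp0.2.1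
      subst hys; rfl
    have hp0last : p0[p0.length - 1]'(by omega) = G.out := by
      have hlast := hp0.2.2.1
      rw [List.getLast?_eq_getElem?, List.getElem?_eq_getElem (by omega)] at hlast
      exact Option.some.inj hlast
    have hvlR : vl ∈ Rch := by
      have hseg := chain_segment (E := G.edge) (P := fun x => x ∈ C1 ∪ {vl}) hp0.1
        (Nat.zero_le l) hl (fun k hk h1 h2 => hup k hk h2)
      rw [hp00, hpl] at hseg
      refine Relation.ReflTransGen.mono ?_ _ _ hseg
      rintro x y ⟨he, hx, hy⟩
      exact ⟨he, fun h => hZ1K x hx (h ▸ hv), fun h => hZ1K y hy (h ▸ hv)⟩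
    have hvjC : vj ∈ Cor := by
      have hseg := chain_segment (E := G.edge) (P := fun x => x ∈ C3 ∪ {G.out}) hp0.1
        (show m ≤ p0.length - 1 by omega) (by omega)
        (fun k hk h1 h2 => hdown k hk h1)
      rw [hp0last, hpm] at hseg
      refine Relation.ReflTransGen.mono ?_ _ _ hseg
      rintro x y ⟨he, hx, hy⟩
      exact ⟨he, fun h => hKZ3 x (h ▸ hv) hx, fun h => hKZ3 y (h ▸ hv) hy⟩
    have hvjnR : vj ∉ Rch := fun h => hRchCor vj h hvjC
    -- build the reducing pair of sets
    apply hirr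
    refine ⟨(Kmid ∪ {vj}) \ (Rch ∪ {v}), (Kmid ∪ {vl}) ∩ Rch, Set.diff_subset,
      Set.inter_subset_left, ⟨vj, Or.inr rfl, ?_⟩, ⟨vl, Or.inr rfl, hvlR⟩, ?_, ?_⟩
    · rintro (h | h)
      · exact hvjnR h
      · exact hvj (h ▸ hv)
    · -- cardinality
      have e1 : (Kmid ∪ {vl}) ∩ Rch = insert vl (Kmid ∩ Rch) := by
        ext x
        simp only [Set.mem_inter_iff, Set.mem_union, Set.mem_singleton_iff,
          Set.mem_insert_iff]
        constructor
        · rintro ⟨h1 | rfl, h2⟩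
          · exact Or.inr ⟨h1, h2⟩
          · exact Or.inl rfl
        · rintro (rfl | ⟨h1, h2⟩)
          · exact ⟨Or.inr rfl, hvlR⟩
          · exact ⟨Or.inl h1, h2⟩
      have e2 : (Kmid ∪ {vj}) \ (Rch ∪ {v}) = insert vj (Kmid \ (Rch ∪ {v})) := by
        ext x
        simp only [Set.mem_diff, Set.mem_union, Set.mem_singleton_iff, Set.mem_insert_iff]
        constructor
        · rintro ⟨h1 | rfl, h2⟩
          · exact Or.inr ⟨h1, h2⟩
          · exact Or.inl rfl
        · rintro (rfl | ⟨h1, h2⟩)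
          · refine ⟨Or.inr rfl, ?_⟩
            rintro (h | rfl)
            · exact hvjnR h
            · exact hvj hv
          · exact ⟨Or.inl h1, h2⟩
      have c1 : ((Kmid ∪ {vl}) ∩ Rch).ncard = (Kmid ∩ Rch).ncard + 1 := by
        rw [e1, Set.ncard_insert_of_notMem (fun h => hvl h.1)]
      have c2 : ((Kmid ∪ {vj}) \ (Rch ∪ {v})).ncard = (Kmid \ (Rch ∪ {v})).ncard + 1 := by
        rw [e2, Set.ncard_insert_of_notMem (fun h => hvj h.1)]
      have c3 : (Kmid \ (Rch ∪ {v})).ncard + 1 = (Kmid \ Rch).ncard := by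
        rw [← Set.diff_diff]
        exact Set.ncard_diff_singleton_add_one ⟨hv, hvnR⟩
      have c4 : (Kmid \ Rch).ncard + (Kmid ∩ Rch).ncard = Kmid.ncard := by
        rw [← Set.ncard_union_eq (Set.disjoint_left.mpr (fun x hx h => hx.2 h.2))]
        congr 1
        ext x
        simp only [Set.mem_union, Set.mem_diff, Set.mem_inter_iff]
        constructor
        · rintro (⟨h, _⟩ | ⟨h, _⟩) <;> exact h
        · intro h
          by_cases hx : x ∈ Rch
          · exact Or.inr ⟨h, hx⟩
          · exact Or.inl ⟨h, hx⟩
      have c5 : (Kmid ∪ {vj}).ncard = Kmid.ncard + 1 := by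
        rw [Set.union_singleton, Set.ncard_insert_of_notMem hvj]
      omega
    · -- zero entries
      rintro r ⟨hrM, hrn⟩ c ⟨hcM, hcR⟩
      rw [IONetwork.genEntry, if_neg]
      rintro (rfl | he)
      · exact hrn (Or.inl hcR)
      · refine hrn (Or.inl (hRch_closed c r hcR he ?_))
        intro h
        exact hrn (Or.inr h)
  constructor
  · -- SSAdjacent
    have ssvl : G.SuperSimple vl := by
      intro p hp
      obtain ⟨l, m, hl, hm, hpl, _⟩ := pathStruct p hp
      exact hpl ▸ List.getElem_mem hl
    have ssvj : G.SuperSimple vj := by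
      intro p hp
      obtain ⟨l, m, hl, hm, _, hpm, _⟩ := pathStruct p hp
      exact hpm ▸ List.getElem_mem hm
    refine ⟨ssvl, ssvj, hvlj, ?_, ?_⟩
    · intro p hp
      obtain ⟨l, m, hl, hm, hpl, hpm, hlm, _⟩ := pathStruct p hp
      refine ⟨hpl ▸ List.getElem_mem hl, hpm ▸ List.getElem_mem hm, ?_⟩
      have il : p.idxOf vl = l := by rw [← hpl]; exact indexOf_getElem_nodup hp.2.2.2 hl
      have im : p.idxOf vj = m := by rw [← hpm]; exact indexOf_getElem_nodup hp.2.2.2 hm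
      rw [il, im]; exact hlm
    · intro c hc p hp hB
      obtain ⟨l, m, hl, hm, hpl, hpm, hlm, hup, hmid, hdown⟩ := pathStruct p hp
      obtain ⟨_, hcmem, h1⟩ := hB.1
      obtain ⟨_, _, h2⟩ := hB.2
      have hi : p.idxOf c < p.length := List.idxOf_lt_length_iff.mpr hcmem
      have hci : p[p.idxOf c]'hi = c := List.getElem_idxOf hi
      have il : p.idxOf vl = l := by rw [← hpl]; exact indexOf_getElem_nodup hp.2.2.2 hl
      have im : p.idxOf vj = m := by rw [← hpm]; exact indexOf_getElem_nodup hp.2.2.2 hm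
      have hcK : p[p.idxOf c]'hi ∈ Kmid := hmid _ hi (il ▸ h1) (im ▸ h2)
      rw [hci] at hcK
      exact notSS c hcK hc
  · exact notSS
end
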